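/- Let q(z;t) = ∏_{n=1}^N (z − x_n(t)) = z^N + Σ_{n=1}^N ξ_n(t) z^{N−n}, with x₁,...,x_N twice differentiable complex-valued functions having pairwise distinct values at time t. Then for each n, ẍ_n = Σ_{ℓ≠n} 2 ẋ_n ẋ_ℓ/(x_n − x_ℓ) − [∏_{ℓ≠n}(x_n − x_ℓ)]^{−1} Σ_{j=1}^N x_n^{N−j} ξ̈_j. -/

import Mathlib

open Finset Polynomial


section Helpers

variable {ι : Type*} [DecidableEq ι]

private lemma deriv_fun_prod (u : Finset ι) (f : ι → ℝ → ℂ) (hf : ∀ i, Differentiable ℝ (f i)) :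
    deriv (fun s => ∏ i ∈ u, f i s)
      = fun s => ∑ i ∈ u, (∏ j ∈ u.erase i, f j s) * deriv (f i) s := by
  funext s
  rw [show (fun s => ∏ i ∈ u, f i s) = (∏ i ∈ u, f i ·) from rfl,
    deriv_fun_finsetProd (fun i _ => (hf i).differentiableAt)]
  simp [smul_eq_mul]

omit [DecidableEq ι] in
private lemma diff_fun_prod (u : Finset ι) (f : ι → ℝ → ℂ) (hf : ∀ i, Differentiable ℝ (f i)) :
    Differentiable ℝ (fun s => ∏ i ∈ u, f i s) :=
  Differentiable.fun_finsetProd (fun i _ => hf i)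

omit [DecidableEq ι] in
private lemma deriv_fun_sum' (u : Finset ι) (f : ι → ℝ → ℂ) (hf : ∀ i, Differentiable ℝ (f i)) :
    deriv (fun s => ∑ i ∈ u, f i s) = fun s => ∑ i ∈ u, deriv (f i) s := by
  funext s
  exact deriv_fun_sum (fun i _ => (hf i).differentiableAt)

private lemma diff_deriv_fun_prod (u : Finset ι) (f : ι → ℝ → ℂ)
    (hf : ∀ i, Differentiable ℝ (f i)) (hf2 : ∀ i, Differentiable ℝ (deriv (f i))) :
    Differentiable ℝ (deriv (fun s => ∏ i ∈ u, f i s)) := by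
  rw [deriv_fun_prod u f hf]
  exact Differentiable.fun_sum (fun i _ => (diff_fun_prod _ f hf).mul (hf2 i))

private lemma deriv2_fun_prod (u : Finset ι) (f : ι → ℝ → ℂ) (hf : ∀ i, Differentiable ℝ (f i))
    (hf2 : ∀ i, Differentiable ℝ (deriv (f i))) (t : ℝ) :
    deriv (deriv (fun s => ∏ i ∈ u, f i s)) t
      = ∑ i ∈ u, ((∑ m ∈ u.erase i, (∏ l ∈ (u.erase i).erase m, f l t) * deriv (f m) t)
            * deriv (f i) t
          + (∏ j ∈ u.erase i, f j t) * deriv (deriv (f i)) t) := by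
  rw [deriv_fun_prod u f hf]
  rw [deriv_fun_sum (fun i _ => ((diff_fun_prod _ f hf).fun_mul (hf2 i)).differentiableAt)]
  refine Finset.sum_congr rfl fun i _ => ?_
  rw [deriv_fun_mul (diff_fun_prod _ f hf).differentiableAt (hf2 i).differentiableAt,
    deriv_fun_prod _ f hf]

private lemma coeff_formula (N : ℕ) (y : Fin N → ℂ) {j : ℕ} (hj : j ≤ N) :
    (∏ i : Fin N, (X - C (y i))).coeff (N - j)
      = (-1:ℂ)^j * ∑ A ∈ Finset.powersetCard j (Finset.univ : Finset (Fin N)), ∏ i ∈ A, y i := by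
  have hc : Multiset.card (Multiset.map y Finset.univ.val) = N := by simp
  have h := Multiset.prod_X_sub_C_coeff (Multiset.map y Finset.univ.val)
    (k := N - j) (by rw [hc]; omega)
  rw [Multiset.map_map] at h
  simp only [Function.comp] at h
  have h0 : (∏ i : Fin N, (X - C (y i)))
      = (Multiset.map (fun i => X - C (y i)) Finset.univ.val).prod := rfl
  rw [h0, h, hc, Nat.sub_sub_self hj, Finset.esymm_map_val]

private lemma eval_expand (N : ℕ) (y : Fin N → ℂ) (z : ℂ) :
    (∏ i : Fin N, (z - y i))
      = z ^ N + ∑ j ∈ Finset.Icc 1 N,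
          (∏ i : Fin N, (X - C (y i))).coeff (N - j) * z ^ (N - j) := by
  have hmonic : (∏ i : Fin N, (X - C (y i))).Monic :=
    monic_prod_of_monic _ _ (fun i _ => monic_X_sub_C _)
  have hdeg : (∏ i : Fin N, (X - C (y i))).natDegree = N := by
    rw [natDegree_prod _ _ (fun i _ => X_sub_C_ne_zero _)]
    simp
  have hev : (∏ i : Fin N, (z - y i)) = (∏ i : Fin N, (X - C (y i))).eval z := by
    simp [eval_prod]
  have hcN : (∏ i : Fin N, (X - C (y i))).coeff N = 1 := by
    simpa only [hdeg] using hmonic.coeff_natDegree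
  rw [hev, eval_eq_sum_range, hdeg, Finset.sum_range_succ, hcN, one_mul, add_comm]
  congr 1
  refine Finset.sum_nbij' (fun k => N - k) (fun j => N - j) ?_ ?_ ?_ ?_ ?_
  · intro k hk; simp only [Finset.mem_range] at hk; simp only [Finset.mem_Icc]; omega
  · intro j hj; simp only [Finset.mem_Icc] at hj; simp only [Finset.mem_range]; omega
  · intro k hk; simp only [Finset.mem_range] at hk; omega
  · intro j hj; simp only [Finset.mem_Icc] at hj; omega
  · intro k hk; simp only [Finset.mem_range] at hk
    rw [Nat.sub_sub_self (by omega)]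

/-- Second derivative at `t` of `s ↦ ∏ i (x n t - x i s)`. -/
private lemma second_deriv_eval (N : ℕ) (x : Fin N → ℝ → ℂ)
    (hdiff : ∀ n, Differentiable ℝ (x n))
    (hdiff2 : ∀ n, Differentiable ℝ (deriv (x n))) (t : ℝ) (n : Fin N) :
    deriv (deriv (fun s => ∏ i : Fin N, (x n t - x i s))) t
      = (∏ l ∈ Finset.univ.erase n, (x n t - x l t)) * (-(deriv (deriv (x n)) t))
        + ∑ m ∈ Finset.univ.erase n,
            2 * ((∏ l ∈ (Finset.univ.erase n).erase m, (x n t - x l t))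
              * (deriv (x n) t * deriv (x m) t)) := by
  set f : Fin N → ℝ → ℂ := fun i s => x n t - x i s with hf
  have hfdiff : ∀ i, Differentiable ℝ (f i) := fun i => (differentiable_const _).sub (hdiff i)
  have hfd : ∀ i, deriv (f i) = fun s => -deriv (x i) s :=
    fun i => funext fun s => deriv_const_sub _
  have hfdiff2 : ∀ i, Differentiable ℝ (deriv (f i)) := by
    intro i; rw [hfd i]; exact (hdiff2 i).neg
  have hfd2 : ∀ i, deriv (deriv (f i)) t = -deriv (deriv (x i)) t := by
    intro i; rw [hfd i]; exact deriv.neg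
  rw [deriv2_fun_prod Finset.univ f hfdiff hfdiff2 t]
  rw [← Finset.add_sum_erase _ _ (Finset.mem_univ n)]
  have hfnt : f n t = 0 := sub_self _
  have hterm : ∀ i ∈ Finset.univ.erase n,
      ((∑ m ∈ Finset.univ.erase i, (∏ l ∈ (Finset.univ.erase i).erase m, f l t) * deriv (f m) t)
          * deriv (f i) t
        + (∏ j ∈ Finset.univ.erase i, f j t) * deriv (deriv (f i)) t)
      = (∏ l ∈ (Finset.univ.erase n).erase i, (x n t - x l t))
          * (deriv (x n) t * deriv (x i) t) := by
    intro i hi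
    obtain ⟨hin, -⟩ := Finset.mem_erase.mp hi
    have hnmem : n ∈ Finset.univ.erase i := Finset.mem_erase.mpr ⟨Ne.symm hin, Finset.mem_univ n⟩
    have hprod0 : (∏ j ∈ Finset.univ.erase i, f j t) = 0 := Finset.prod_eq_zero hnmem hfnt
    rw [hprod0, zero_mul, add_zero]
    rw [Finset.sum_eq_single_of_mem n hnmem (fun m hm hmn => by
      refine mul_eq_zero_of_left (Finset.prod_eq_zero (f := fun l => f l t) ?_ hfnt) _
      exact Finset.mem_erase.mpr ⟨Ne.symm hmn, hnmem⟩)]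
    have hee : (Finset.univ.erase i).erase n = (Finset.univ.erase n).erase i := by
      ext a; simp only [Finset.mem_erase, Finset.mem_univ, and_true]; tauto
    rw [hee, hfd n, hfd i]
    have : ∀ l, f l t = x n t - x l t := fun l => rfl
    simp only [this]
    ring
  rw [Finset.sum_congr rfl hterm]
  have hmain :
      ((∑ m ∈ Finset.univ.erase n, (∏ l ∈ (Finset.univ.erase n).erase m, f l t) * deriv (f m) t)
          * deriv (f n) t
        + (∏ j ∈ Finset.univ.erase n, f j t) * deriv (deriv (f n)) t)
      = (∏ l ∈ Finset.univ.erase n, (x n t - x l t)) * (-(deriv (deriv (x n)) t))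
        + ∑ m ∈ Finset.univ.erase n,
            (∏ l ∈ (Finset.univ.erase n).erase m, (x n t - x l t))
              * (deriv (x n) t * deriv (x m) t) := by
    rw [hfd2 n, hfd n]
    have : ∀ l, f l t = x n t - x l t := fun l => rfl
    simp only [this]
    rw [Finset.sum_mul]
    rw [add_comm]
    congr 1
    · refine Finset.sum_congr rfl fun m hm => ?_
      rw [hfd m]
      ring
  rw [hmain, add_assoc, ← Finset.sum_add_distrib]
  congr 1
  refine Finset.sum_congr rfl fun m hm => ?_
  ring

end Helpers

theorem simple_roots_second_derivative_formula
    (N : ℕ) (hN : 2 ≤ N)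
    (x : Fin N → ℝ → ℂ)
    (hdiff : ∀ n, Differentiable ℝ (x n))
    (hdiff2 : ∀ n, Differentiable ℝ (deriv (x n)))
    (ξ : ℕ → ℝ → ℂ)
    (hξ : ∀ j t, ξ j t = (∏ i : Fin N, (X - C (x i t))).coeff (N - j))
    (t : ℝ)
    (hdist : ∀ n m : Fin N, n ≠ m → x n t ≠ x m t) :
    ∀ n : Fin N,
      deriv (deriv (x n)) t
        = (∑ ℓ ∈ Finset.univ \ {n},
            2 * deriv (x n) t * deriv (x ℓ) t / (x n t - x ℓ t))
          - (∏ ℓ ∈ Finset.univ \ {n}, (x n t - x ℓ t))⁻¹ *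
              ∑ j ∈ Finset.Icc 1 N, (x n t) ^ (N - j) * deriv (deriv (ξ j)) t := by
  intro n
  set F : ℕ → ℝ → ℂ :=
    fun j s => (-1:ℂ)^j * ∑ A ∈ Finset.powersetCard j (Finset.univ : Finset (Fin N)),
      ∏ i ∈ A, x i s with hFdef
  have hFdiff : ∀ j, Differentiable ℝ (F j) := fun j =>
    (Differentiable.fun_sum (fun A _ => diff_fun_prod A x hdiff)).const_mul _
  have hsumdiff : ∀ j : ℕ, Differentiable ℝ
      (fun s => ∑ A ∈ Finset.powersetCard j (Finset.univ : Finset (Fin N)), ∏ i ∈ A, x i s) :=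
    fun j => Differentiable.fun_sum (fun A _ => diff_fun_prod A x hdiff)
  have hFderiv : ∀ j, deriv (F j)
      = fun s => (-1:ℂ)^j * ∑ A ∈ Finset.powersetCard j (Finset.univ : Finset (Fin N)),
          ∑ i ∈ A, (∏ l ∈ A.erase i, x l s) * deriv (x i) s := by
    intro j
    funext s
    have h1 : deriv (F j) s = (-1:ℂ)^j *
        deriv (fun s => ∑ A ∈ Finset.powersetCard j (Finset.univ : Finset (Fin N)),
          ∏ i ∈ A, x i s) s :=
      deriv_const_mul _ ((hsumdiff j).differentiableAt)
    rw [h1, deriv_fun_sum' _ (fun A s => ∏ i ∈ A, x i s) (fun A => diff_fun_prod A x hdiff)]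
    congr 1
    refine Finset.sum_congr rfl fun A _ => ?_
    exact congrFun (deriv_fun_prod A x hdiff) s
  have hFdiff2 : ∀ j, Differentiable ℝ (deriv (F j)) := by
    intro j
    rw [hFderiv j]
    exact (Differentiable.fun_sum (fun A _ => Differentiable.fun_sum (fun i _ =>
      (diff_fun_prod _ x hdiff).fun_mul (hdiff2 i)))).const_mul _
  have hξF : ∀ j ∈ Finset.Icc 1 N, ξ j = F j := by
    intro j hj
    funext s
    rw [hξ j s, coeff_formula N (fun i => x i s) (Finset.mem_Icc.mp hj).2]
  have hC : ∀ s, (∑ j ∈ Finset.Icc 1 N, (x n t)^(N-j) * ξ j s)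
      = (∏ i : Fin N, (x n t - x i s)) - (x n t)^N := by
    intro s
    have he := eval_expand N (fun i => x i s) (x n t)
    calc (∑ j ∈ Finset.Icc 1 N, (x n t)^(N-j) * ξ j s)
        = ∑ j ∈ Finset.Icc 1 N,
            (∏ i : Fin N, (X - C (x i s))).coeff (N - j) * (x n t)^(N-j) :=
          Finset.sum_congr rfl fun j hj => by rw [hξ j s]; ring
      _ = (∏ i : Fin N, (x n t - x i s)) - (x n t)^N := by rw [he]; ring
  have e1 : (fun s => ∑ j ∈ Finset.Icc 1 N, (x n t)^(N-j) * F j s)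
      = fun s => (∏ i : Fin N, (x n t - x i s)) - (x n t)^N := by
    funext s
    rw [← hC s]
    exact Finset.sum_congr rfl fun j hj => by rw [hξF j hj]
  have e2 : deriv (fun s => ∑ j ∈ Finset.Icc 1 N, (x n t)^(N-j) * F j s)
      = fun s => ∑ j ∈ Finset.Icc 1 N, (x n t)^(N-j) * deriv (F j) s := by
    rw [deriv_fun_sum' _ (fun j s => (x n t)^(N-j) * F j s)
      (fun j => (hFdiff j).const_mul _)]
    funext s
    exact Finset.sum_congr rfl fun j _ => deriv_const_mul _ (hFdiff j).differentiableAt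
  have e3 : deriv (fun s => ∏ i : Fin N, (x n t - x i s))
      = fun s => ∑ j ∈ Finset.Icc 1 N, (x n t)^(N-j) * deriv (F j) s := by
    have hsc : deriv (fun s => (∏ i : Fin N, (x n t - x i s)) - (x n t)^N)
        = deriv (fun s => ∏ i : Fin N, (x n t - x i s)) :=
      funext fun s => deriv_sub_const _
    rw [← hsc, ← e1, e2]
  have e4 : deriv (deriv (fun s => ∏ i : Fin N, (x n t - x i s))) t
      = ∑ j ∈ Finset.Icc 1 N, (x n t)^(N-j) * deriv (deriv (F j)) t := by
    rw [e3, deriv_fun_sum (fun j _ => ((hFdiff2 j).const_mul _).differentiableAt)]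
    exact Finset.sum_congr rfl fun j _ => deriv_const_mul _ (hFdiff2 j).differentiableAt
  have key : (∑ j ∈ Finset.Icc 1 N, (x n t) ^ (N - j) * deriv (deriv (ξ j)) t)
      = (∏ l ∈ Finset.univ.erase n, (x n t - x l t)) * (-(deriv (deriv (x n)) t))
        + ∑ m ∈ Finset.univ.erase n,
            2 * ((∏ l ∈ (Finset.univ.erase n).erase m, (x n t - x l t))
              * (deriv (x n) t * deriv (x m) t)) := by
    rw [← second_deriv_eval N x hdiff hdiff2 t n, e4]
    refine Finset.sum_congr rfl fun j hj => ?_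
    rw [hξF j hj]
  simp only [Finset.sdiff_singleton_eq_erase]
  rw [key]
  have hP : (∏ l ∈ Finset.univ.erase n, (x n t - x l t)) ≠ 0 :=
    Finset.prod_ne_zero_iff.mpr fun l hl =>
      sub_ne_zero.mpr (hdist n l (Ne.symm (Finset.mem_erase.mp hl).1))
  have hsum : (∏ l ∈ Finset.univ.erase n, (x n t - x l t))⁻¹ *
      (∑ m ∈ Finset.univ.erase n,
        2 * ((∏ l ∈ (Finset.univ.erase n).erase m, (x n t - x l t))
          * (deriv (x n) t * deriv (x m) t)))
      = ∑ m ∈ Finset.univ.erase n, 2 * deriv (x n) t * deriv (x m) t / (x n t - x m t) := by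
    rw [Finset.mul_sum]
    refine Finset.sum_congr rfl fun m hm => ?_
    have hd : x n t - x m t ≠ 0 :=
      sub_ne_zero.mpr (hdist n m (Ne.symm (Finset.mem_erase.mp hm).1))
    have hQ : (∏ l ∈ (Finset.univ.erase n).erase m, (x n t - x l t)) ≠ 0 :=
      Finset.prod_ne_zero_iff.mpr fun l hl =>
        sub_ne_zero.mpr (hdist n l (Ne.symm (Finset.mem_erase.mp
          (Finset.mem_of_mem_erase hl)).1))
    rw [← Finset.mul_prod_erase _ _ hm]
    field_simp
  rw [mul_add, inv_mul_cancel_left₀ hP, hsum]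
  ring
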